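/- Let k ≥ 2 be an integer, q ∈ (G, 2) where G = (1+√5)/2, and m ≥ 0 an integer. If x ∈ [0, 1/(q(q−1))] is such that f_0(x) = qx lies in N_k^m(q) = ⋂_{i=0}^m g_{q,k}^i(U_q + 1) ∩ g_{q,k}^m(U_q), then x ∈ U_q^{(m+2)} ∩ J_q (so x has exactly m+2 base q expansions), and hence q ∈ B_{m+2}. -/

import Mathlib

open Set

/-- Projection map: the value of the (0-indexed) digit sequence `a` in base `q`,
`π_q(a) = Σ_{j=0}^∞ a_j q^{-(j+1)}`. -/
noncomputable def piQ (q : ℝ) (a : ℕ → ℝ) : ℝ := ∑' j : ℕ, a j / q ^ (j + 1)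

/-- `a` is a sequence of digits in `{0,1}`. -/
def IsDigitSeq (a : ℕ → ℝ) : Prop := ∀ j, a j = 0 ∨ a j = 1

/-- `a` is a sequence of digits in `{-1,0,1}`. -/
def IsExtDigitSeq (a : ℕ → ℝ) : Prop := ∀ j, a j = -1 ∨ a j = 0 ∨ a j = 1

/-- The set of base-`q` expansions of `x`. -/
def SigmaSet (q x : ℝ) : Set (ℕ → ℝ) := {a | IsDigitSeq a ∧ piQ q a = x}

/-- The interval `I_q = [0, 1/(q-1)]`. -/
def Iq (q : ℝ) : Set ℝ := Set.Icc 0 (1 / (q - 1))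

/-- The switch region `J_q = [1/q, 1/(q(q-1))]`. -/
def Jq (q : ℝ) : Set ℝ := Set.Icc (1 / q) (1 / (q * (q - 1)))

/-- The set of points of `I_q` having exactly `m` base-`q` expansions. -/
def UqM (q : ℝ) (m : ℕ∞) : Set ℝ := {x | x ∈ Iq q ∧ (SigmaSet q x).encard = m}

/-- The set of points of `I_q` having a unique base-`q` expansion. -/
def Uq (q : ℝ) : Set ℝ := UqM q 1

/-- `B_m`: the set of bases `q ∈ (1,2)` for which some point has exactly `m` expansions. -/
def Bset (m : ℕ∞) : Set ℝ := {q | q ∈ Set.Ioo (1 : ℝ) 2 ∧ (UqM q m).Nonempty}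

/-- `x` is the `k`-Bonacci number: the root in `(1,2)` of `x^k = x^{k-1} + ⋯ + x + 1`. -/
def IsBonacci (k : ℕ) (x : ℝ) : Prop :=
  x ∈ Set.Ioo (1 : ℝ) 2 ∧ x ^ k = ∑ i ∈ Finset.range k, x ^ i

/-- `a` contains no occurrence of the word `01^k` as a consecutive block. -/
def AvoidsWord01 (k : ℕ) (a : ℕ → ℝ) : Prop :=
  ∀ i, ¬(a i = 0 ∧ ∀ j, 1 ≤ j → j ≤ k → a (i + j) = 1)

/-- `a` contains no occurrence of the word `10^k` as a consecutive block. -/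
def AvoidsWord10 (k : ℕ) (a : ℕ → ℝ) : Prop :=
  ∀ i, ¬(a i = 1 ∧ ∀ j, 1 ≤ j → j ≤ k → a (i + j) = 0)

/-- `S_k`: the set of `{0,1}`-sequences avoiding the words `01^k` and `10^k`. -/
def Sset (k : ℕ) : Set (ℕ → ℝ) := {a | IsDigitSeq a ∧ AvoidsWord01 k a ∧ AvoidsWord10 k a}

/-- `g_{q,k} = f_1^{-(k-1)} ∘ f_0^{-1}`, where `f_0^{-1}(y) = y/q` and `f_1^{-1}(y) = (y+1)/q`. -/
noncomputable def gMap (q : ℝ) (k : ℕ) (x : ℝ) : ℝ := (fun y => (y + 1) / q)^[k - 1] (x / q)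

/-- The maps `f_0(x) = qx` (for `b = false`) and `f_1(x) = qx - 1` (for `b = true`). -/
noncomputable def fDigit (q : ℝ) (b : Bool) (x : ℝ) : ℝ := if b then q * x - 1 else q * x

/-- `(a, b)` is a bounded gap of `C`: a bounded connected component of `ℝ \ C`. -/
def IsGap (C : Set ℝ) (a b : ℝ) : Prop :=
  a < b ∧ a ∈ C ∧ b ∈ C ∧ Set.Ioo a b ∩ C = ∅

/-- The left endpoint of the bridge of `C` lying immediately to the left of the gap `(a, b)`:
the right endpoint of the nearest gap to the left having diameter at least `b - a`
(or `min C` if there is no such gap). -/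
noncomputable def leftBridgeStart (C : Set ℝ) (a b : ℝ) : ℝ :=
  sSup ({sInf C} ∪ {d | ∃ c, IsGap C c d ∧ d ≤ a ∧ b - a ≤ d - c})

/-- The right endpoint of the bridge of `C` lying immediately to the right of the gap `(a, b)`. -/
noncomputable def rightBridgeEnd (C : Set ℝ) (a b : ℝ) : ℝ :=
  sInf ({sSup C} ∪ {c | ∃ d, IsGap C c d ∧ b ≤ c ∧ b - a ≤ d - c})

/-- The (Newhouse) thickness of a compact set `C ⊆ ℝ`: the infimum over all bounded gaps `G`
of the ratio of the length of the bridge on either side of `G` to the length of `G`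
(`∞` if `C` has no bounded gap). -/
noncomputable def thickness (C : Set ℝ) : ENNReal :=
  ⨅ p : {p : ℝ × ℝ // IsGap C p.1 p.2},
    ENNReal.ofReal
      (min ((p.1.1 - leftBridgeStart C p.1.1 p.1.2) / (p.1.2 - p.1.1))
        ((rightBridgeEnd C p.1.1 p.1.2 - p.1.2) / (p.1.2 - p.1.1)))

/-- `B` is contained in a gap of `A`, i.e. in a connected component of `ℝ \ A`. -/
def ContainedInGap (B A : Set ℝ) : Prop :=
  ∃ x ∈ Aᶜ, B ⊆ connectedComponentIn Aᶜ x

/-- Two sets are interleaved if neither is contained in a gap of the other. -/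
def Interleaved (A B : Set ℝ) : Prop :=
  ¬ContainedInGap B A ∧ ¬ContainedInGap A B

/-- `A` and `B` are `ε`-strongly interleaved: any compact sets within Hausdorff distance `ε`
of `A` and `B` respectively are interleaved. -/
def StronglyInterleaved (ε : ℝ) (A B : Set ℝ) : Prop :=
  ∀ A' B' : Set ℝ, IsCompact A' → IsCompact B' →
    EMetric.hausdorffEdist A A' ≤ ENNReal.ofReal ε →
    EMetric.hausdorffEdist B B' ≤ ENNReal.ofReal ε → Interleaved A' B'

/-- The sequence `0^{k-3}(01^{k-1})^∞` (0-indexed). -/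
noncomputable def seqG (k : ℕ) : ℕ → ℝ := fun j =>
  if j < k - 3 then 0 else if (j - (k - 3)) % k = 0 then 0 else 1

/-- The sequence `1^{k-3}(10^{k-1})^∞` (0-indexed). -/
noncomputable def seqH (k : ℕ) : ℕ → ℝ := fun j =>
  if j < k - 3 then 1 else if (j - (k - 3)) % k = 0 then 1 else 0

/-- The sequence `(1^{k-1}0)^∞` (0-indexed). -/
noncomputable def seqP (k : ℕ) : ℕ → ℝ := fun j => if j % k = k - 1 then 0 else 1



section Helpers

variable {q : ℝ}

private lemma digit_nonneg {a : ℕ → ℝ} (ha : IsDigitSeq a) (j : ℕ) : 0 ≤ a j := by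
  rcases ha j with h | h <;> simp [h]

private lemma digit_le_one {a : ℕ → ℝ} (ha : IsDigitSeq a) (j : ℕ) : a j ≤ 1 := by
  rcases ha j with h | h <;> simp [h]

private lemma summable_piQ (hq : 1 < q) {a : ℕ → ℝ} (ha : IsDigitSeq a) :
    Summable (fun j => a j / q ^ (j + 1)) := by
  have h0 : (0:ℝ) < q := lt_trans one_pos hq
  have hgeo : Summable (fun j : ℕ => (1/q) ^ j) :=
    summable_geometric_of_lt_one (by positivity) (by rw [div_lt_one h0]; exact hq)
  refine Summable.of_nonneg_of_le (fun j => div_nonneg (digit_nonneg ha j) (by positivity))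
    (fun j => ?_) hgeo
  rw [one_div, inv_pow, ← one_div]
  exact div_le_div₀ (by norm_num) (digit_le_one ha j) (by positivity)
    (pow_le_pow_right₀ hq.le (Nat.le_succ j))

private lemma summable_geo_aux (hq : 1 < q) :
    Summable (fun j : ℕ => (1/q) ^ (j + 1)) := by
  have h0 : (0:ℝ) < q := lt_trans one_pos hq
  have hgeo : Summable (fun j : ℕ => (1/q) ^ j) :=
    summable_geometric_of_lt_one (by positivity) (by rw [div_lt_one h0]; exact hq)
  simpa [pow_succ] using hgeo.mul_right (1/q)

private lemma tsum_geo_aux (hq : 1 < q) :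
    ∑' j : ℕ, (1/q) ^ (j + 1) = 1 / (q - 1) := by
  have h0 : (0:ℝ) < q := lt_trans one_pos hq
  have hlt : |1/q| < 1 := by
    rw [abs_of_pos (by positivity), div_lt_one h0]; exact hq
  have := tsum_geometric_of_abs_lt_one hlt
  calc ∑' j : ℕ, (1/q) ^ (j + 1) = (∑' j : ℕ, (1/q) ^ j) * (1/q) := by
        simp_rw [pow_succ]; exact tsum_mul_right
    _ = (1 - 1/q)⁻¹ * (1/q) := by rw [this]
    _ = 1 / (q - 1) := by
        have h1 : 1/q < 1 := by rw [div_lt_one h0]; exact hq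
        have hne : (1:ℝ) - 1/q ≠ 0 := by linarith
        have hne2 : q - 1 ≠ 0 := by linarith
        field_simp

private lemma piQ_nonneg (hq : 1 < q) {a : ℕ → ℝ} (ha : IsDigitSeq a) : 0 ≤ piQ q a :=
  tsum_nonneg fun j => div_nonneg (digit_nonneg ha j) (by positivity)

private lemma piQ_le (hq : 1 < q) {a : ℕ → ℝ} (ha : IsDigitSeq a) :
    piQ q a ≤ 1 / (q - 1) := by
  have h0 : (0:ℝ) < q := lt_trans one_pos hq
  rw [← tsum_geo_aux hq]
  refine Summable.tsum_le_tsum (fun j => ?_) (summable_piQ hq ha) (summable_geo_aux hq)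
  rw [one_div, inv_pow, ← one_div]
  exact div_le_div₀ (by norm_num) (digit_le_one ha j) (by positivity) le_rfl

private lemma SigmaSet_eq_empty (hq : 1 < q) {z : ℝ} (hz : z < 0 ∨ 1 / (q - 1) < z) :
    SigmaSet q z = ∅ := by
  ext a
  simp only [SigmaSet, Set.mem_setOf_eq, Set.mem_empty_iff_false, iff_false, not_and]
  intro ha hpi
  rcases hz with h | h
  · exact absurd (hpi ▸ piQ_nonneg hq ha) (not_le.2 h)
  · exact absurd (hpi ▸ piQ_le hq ha) (not_le.2 h)

private lemma piQ_shift (hq : 1 < q) {a : ℕ → ℝ} (ha : IsDigitSeq a) :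
    piQ q a = (a 0 + piQ q (fun j => a (j + 1))) / q := by
  have h0 : (0:ℝ) < q := lt_trans one_pos hq
  have hs := summable_piQ hq ha
  have htail : IsDigitSeq (fun j => a (j + 1)) := fun j => ha (j + 1)
  have h1 : ∑' j : ℕ, a j / q ^ (j + 1) = a 0 / q ^ (0 + 1) + ∑' j : ℕ, a (j + 1) / q ^ (j + 1 + 1) :=
    hs.tsum_eq_zero_add
  have h2 : ∑' j : ℕ, a (j + 1) / q ^ (j + 1 + 1)
      = (∑' j : ℕ, a (j + 1) / q ^ (j + 1)) / q := by
    rw [← tsum_div_const]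
    congr 1; funext j
    rw [pow_succ, div_div]
  have h3 : ∑' j : ℕ, a j / q ^ (j + 1)
      = (a 0 + ∑' j : ℕ, a (j + 1) / q ^ (j + 1)) / q := by
    rw [h1, h2, zero_add, pow_one, add_div]
  exact h3

/-- prepend a digit to a sequence -/
private noncomputable def consDig (ε : ℝ) (b : ℕ → ℝ) : ℕ → ℝ :=
  fun j => if j = 0 then ε else b (j - 1)

private lemma consDig_zero (ε : ℝ) (b : ℕ → ℝ) : consDig ε b 0 = ε := rfl

private lemma consDig_succ (ε : ℝ) (b : ℕ → ℝ) (j : ℕ) : consDig ε b (j + 1) = b j := by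
  simp [consDig]

private lemma consDig_inj (ε : ℝ) : Function.Injective (consDig ε) := by
  intro b c h
  funext j
  have := congrFun h (j + 1)
  simpa [consDig_succ] using this

private lemma branch (hq : 1 < q) (x : ℝ) :
    (SigmaSet q x).encard
      = (SigmaSet q (q * x)).encard + (SigmaSet q (q * x - 1)).encard := by
  have h0 : (0:ℝ) < q := lt_trans one_pos hq
  have hdecomp : SigmaSet q x
      = consDig 0 '' SigmaSet q (q * x) ∪ consDig 1 '' SigmaSet q (q * x - 1) := by
    ext a
    constructor
    · rintro ⟨ha, hpi⟩
      set b : ℕ → ℝ := fun j => a (j + 1) with hbdef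
      have hb : IsDigitSeq b := fun j => ha (j + 1)
      have hshift := piQ_shift hq ha
      have hpib : piQ q b = q * x - a 0 := by
        rw [hshift] at hpi
        have : a 0 + piQ q b = q * x := by
          field_simp at hpi; linarith
        linarith
      have hcons : a = consDig (a 0) b := by
        funext j
        cases j with
        | zero => rfl
        | succ n => simp [consDig_succ, hbdef]
      rcases ha 0 with h00 | h00
      · left
        exact ⟨b, ⟨hb, by rw [hpib, h00]; ring⟩, by rw [hcons, h00]⟩
      · right
        exact ⟨b, ⟨hb, by rw [hpib, h00]⟩, by rw [hcons, h00]⟩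
    · rintro (⟨b, ⟨hb, hpib⟩, rfl⟩ | ⟨b, ⟨hb, hpib⟩, rfl⟩)
      · have hd : IsDigitSeq (consDig 0 b) := by
          intro j; cases j with
          | zero => left; rfl
          | succ n => rw [consDig_succ]; exact hb n
        refine ⟨hd, ?_⟩
        have htail : (fun j => consDig 0 b (j + 1)) = b := funext fun j => consDig_succ _ _ _
        rw [piQ_shift hq hd, htail, consDig_zero, hpib]
        field_simp
        ring
      · have hd : IsDigitSeq (consDig 1 b) := by
          intro j; cases j with
          | zero => right; rfl
          | succ n => rw [consDig_succ]; exact hb n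
        refine ⟨hd, ?_⟩
        have htail : (fun j => consDig 1 b (j + 1)) = b := funext fun j => consDig_succ _ _ _
        rw [piQ_shift hq hd, htail, consDig_zero, hpib]
        field_simp
        ring
  have hdisj : Disjoint (consDig 0 '' SigmaSet q (q * x))
      (consDig 1 '' SigmaSet q (q * x - 1)) := by
    rw [Set.disjoint_left]
    rintro a ⟨b, _, rfl⟩ ⟨c, _, hc⟩
    have := congrFun hc 0
    simp only [consDig_zero] at this
    norm_num at this
  rw [hdecomp, Set.encard_union_eq hdisj,
    (consDig_inj 0).encard_image, (consDig_inj 1).encard_image]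

private lemma step_lemma (hq : 1 < q) (hkey : 1 / (q - 1) < 1 + 1 / q) {t : ℝ}
    (ht : 1 / q ≤ t) :
    (SigmaSet q ((t + 1) / q)).encard = (SigmaSet q t).encard := by
  have h0 : (0:ℝ) < q := lt_trans one_pos hq
  have h1 : q * ((t + 1) / q) = t + 1 := by field_simp
  have h2 : q * ((t + 1) / q) - 1 = t := by rw [h1]; ring
  rw [branch hq ((t + 1) / q), h1, show t + 1 - 1 = t from by ring,
    SigmaSet_eq_empty hq (Or.inr (by linarith)), Set.encard_empty, zero_add]

private lemma chain_lemma (hq : 1 < q) (hkey : 1 / (q - 1) < 1 + 1 / q) {t : ℝ}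
    (ht : 1 / q ≤ t) (j : ℕ) :
    (SigmaSet q ((fun y => (y + 1) / q)^[j] t)).encard = (SigmaSet q t).encard := by
  have h0 : (0:ℝ) < q := lt_trans one_pos hq
  have hlb : ∀ n : ℕ, 1 / q ≤ (fun y => (y + 1) / q)^[n] t := by
    intro n
    induction n with
    | zero => simpa using ht
    | succ n ih =>
      rw [Function.iterate_succ_apply']
      have h1 : (0:ℝ) ≤ (fun y => (y + 1) / q)^[n] t := le_trans (by positivity) ih
      have : (1:ℝ) ≤ (fun y => (y + 1) / q)^[n] t + 1 := by linarith
      calc (1:ℝ) / q ≤ ((fun y => (y + 1) / q)^[n] t + 1) / q := by gcongr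
        _ = _ := rfl
  induction j with
  | zero => simp
  | succ n ih =>
    rw [Function.iterate_succ_apply', step_lemma hq hkey (hlb n)]
    exact ih

private lemma gMap_encard (hq : 1 < q) (hkey : 1 / (q - 1) < 1 + 1 / q) (k : ℕ) {w : ℝ}
    (hw : 1 ≤ w) :
    (SigmaSet q (gMap q k w)).encard
      = (SigmaSet q w).encard + (SigmaSet q (w - 1)).encard := by
  have h0 : (0:ℝ) < q := lt_trans one_pos hq
  have h1 : (1:ℝ) / q ≤ w / q := by gcongr
  have h2 : q * (w / q) = w := by field_simp
  rw [gMap, chain_lemma hq hkey h1 (k - 1), branch hq (w / q), h2]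

private lemma gMap_injective (hq : 1 < q) (k : ℕ) : Function.Injective (gMap q k) := by
  have h0 : (0:ℝ) < q := lt_trans one_pos hq
  have hf : Function.Injective (fun y : ℝ => (y + 1) / q) := by
    intro a b h
    simp only at h
    field_simp at h
    linarith
  intro a b h
  have h2 : a / q = b / q := hf.iterate (k - 1) (by simpa [gMap] using h)
  field_simp at h2
  exact h2

private lemma mem_Uq_iff {w : ℝ} : w ∈ Uq q ↔ w ∈ Iq q ∧ (SigmaSet q w).encard = 1 :=
  Iff.rfl

private lemma main_lemma (hq : 1 < q) (hkey : 1 / (q - 1) < 1 + 1 / q) (k : ℕ) :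
    ∀ m : ℕ, ∀ w : ℝ,
      w ∈ (⋂ i ∈ Finset.Icc 0 m, (gMap q k)^[i] '' ((fun u => u + 1) '' Uq q)) ∩
        ((gMap q k)^[m] '' Uq q) →
      (SigmaSet q w).encard = (m : ℕ∞) + 1 := by
  intro m
  induction m with
  | zero =>
    intro w hw
    obtain ⟨_, h2⟩ := hw
    obtain ⟨u, hu, huw⟩ := h2
    simp only [Function.iterate_zero, id_eq] at huw
    rw [← huw, hu.2]
    simp
  | succ n ih =>
    intro w hw
    obtain ⟨h1, h2⟩ := hw
    rw [Function.iterate_succ', Set.image_comp] at h2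
    obtain ⟨v, hv, rfl⟩ := h2
    have hv1 : ∀ i ∈ Finset.Icc 0 n, v ∈ (gMap q k)^[i] '' ((fun u => u + 1) '' Uq q) := by
      intro i hi
      have hi' : i + 1 ∈ Finset.Icc 0 (n + 1) := by
        simp only [Finset.mem_Icc] at hi ⊢
        omega
      have hmem := Set.mem_iInter₂.1 h1 (i + 1) hi'
      rw [Function.iterate_succ', Set.image_comp] at hmem
      obtain ⟨u, hu, huv⟩ := hmem
      rwa [← gMap_injective hq k huv]
    have hv0 : v ∈ (fun u => u + 1) '' Uq q := by
      have := hv1 0 (by simp)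
      simpa using this
    obtain ⟨u, hu, rfl⟩ := hv0
    have huI : u ∈ Iq q := hu.1
    have hu0 : (0:ℝ) ≤ u := huI.1
    have hge : (1:ℝ) ≤ u + 1 := by linarith
    have hind : (SigmaSet q (u + 1)).encard = (n : ℕ∞) + 1 :=
      ih (u + 1) ⟨Set.mem_iInter₂.2 hv1, hv⟩
    have hu1 : (SigmaSet q (u + 1 - 1)).encard = 1 := by
      rw [show u + 1 - 1 = u by ring]
      exact hu.2
    rw [gMap_encard hq hkey k hge, hind, hu1]
    push_cast
    ring

end Helpers

theorem intersection_gives_nonempty_B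
    (k : ℕ) (hk : 2 ≤ k) (q : ℝ) (hq : q ∈ Set.Ioo ((1 + Real.sqrt 5) / 2) 2)
    (m : ℕ) (x : ℝ) (hx : x ∈ Set.Icc (0 : ℝ) (1 / (q * (q - 1))))
    (hfx : q * x ∈ (⋂ i ∈ Finset.Icc 0 m, (gMap q k)^[i] '' ((fun u => u + 1) '' Uq q)) ∩
        ((gMap q k)^[m] '' Uq q)) :
    x ∈ UqM q ((m : ℕ∞) + 2) ∩ Jq q ∧ q ∈ Bset ((m : ℕ∞) + 2) := by
  obtain ⟨hGq, hq2⟩ := hq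
  have hs5 : (2:ℝ) < Real.sqrt 5 := by
    nlinarith [Real.sq_sqrt (show (0:ℝ) ≤ 5 by norm_num), Real.sqrt_nonneg 5]
  have hq1 : 1 < q := by linarith
  have h0 : (0:ℝ) < q := by linarith
  have hqq : q * q - q - 1 > 0 := by
    nlinarith [Real.sq_sqrt (show (0:ℝ) ≤ 5 by norm_num), Real.sqrt_nonneg 5]
  have hq1' : (0:ℝ) < q - 1 := by linarith
  have hkey : 1 / (q - 1) < 1 + 1 / q := by
    have h1 : 1 + 1 / q = (q + 1) / q := by field_simp
    rw [h1, div_lt_div_iff₀ hq1' h0]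
    nlinarith
  obtain ⟨hfx1, hfx2⟩ := hfx
  have hN : (SigmaSet q (q * x)).encard = (m : ℕ∞) + 1 :=
    main_lemma hq1 hkey k m (q * x) ⟨hfx1, hfx2⟩
  have hU1 : q * x ∈ (fun u => u + 1) '' Uq q := by
    have := Set.mem_iInter₂.1 hfx1 0 (by simp)
    simpa using this
  obtain ⟨u, hu, huq⟩ := hU1
  simp only at huq
  have huI : u ∈ Iq q := hu.1
  have hu0 : (0:ℝ) ≤ u := huI.1
  have hx1 : 1 ≤ q * x := by linarith
  have hS1 : (SigmaSet q (q * x - 1)).encard = 1 := by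
    rw [show q * x - 1 = u by linarith]
    exact hu.2
  have hEx : (SigmaSet q x).encard = (m : ℕ∞) + 2 := by
    rw [branch hq1 x, hN, hS1, add_assoc]
    rfl
  have hxIq : x ∈ Iq q := by
    refine ⟨hx.1, ?_⟩
    calc x ≤ 1 / (q * (q - 1)) := hx.2
      _ ≤ 1 / (q - 1) := by
        apply one_div_le_one_div_of_le hq1'
        nlinarith
  have hxU : x ∈ UqM q ((m : ℕ∞) + 2) := ⟨hxIq, hEx⟩
  have hxJ : x ∈ Jq q := by
    refine ⟨?_, hx.2⟩
    rw [div_le_iff₀ h0]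
    nlinarith
  exact ⟨⟨hxU, hxJ⟩, ⟨⟨hq1, hq2⟩, x, hxU⟩⟩
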